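/- arXiv:1611.08714 — 2 statements merged into one kernel-verified Lean document; each statement's English description precedes it below -/
import Mathlib

section
/- Dependence-testing bound (used in the proof of the achievability theorem): Let P_X be a probability distribution on a measurable input space 𝒳 and let P_{Y|X} be a Markov kernel to a measurable output space 𝒴. Assume the joint distribution P_{XY} is absolutely continuous with respect to the product P_X × P_Y, where P_Y is the induced output distribution, and define the information density i(x;y) = log( dP_{XY}/d(P_X × P_Y) )(x,y). Then for every integer M ≥ 1 there exists a code with M equiprobable messages (an encoder f: {1,…,M} → 𝒳 and a decoder g: 𝒴 → {1,…,M}) whose average error probability ε̄ satisfies ε̄ ≤ E[ exp( −[ i(X;Y) − log((M−1)/2) ]⁺ ) ], where the expectation is with respect to (X,Y) ~ P_{XY} and [a]⁺ = max{0, a}. -/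
open MeasureTheory ProbabilityTheory
open scoped ENNReal BigOperators

section AuxDT

variable {𝒳 : Type*} [MeasurableSpace 𝒳]

lemma auxDT_pi_map_eval (PX : Measure 𝒳) [IsProbabilityMeasure PX] {M : ℕ} (i : Fin M) :
    (Measure.pi fun _ : Fin M => PX).map (Function.eval i) = PX := by
  classical
  ext s hs
  rw [Measure.map_apply (measurable_pi_apply i) hs]
  have hset : Function.eval i ⁻¹' s =
      Set.pi Set.univ (Function.update (fun _ : Fin M => (Set.univ : Set 𝒳)) i s) := by
    ext c
    simp only [Set.mem_preimage, Set.mem_pi, Set.mem_univ, true_implies, Function.eval]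
    constructor
    · intro h k
      rcases eq_or_ne k i with rfl | hk
      · simpa using h
      · simp [Function.update_of_ne hk]
    · intro h
      simpa using h i
  rw [hset, Measure.pi_pi]
  rw [Finset.prod_eq_single i (fun k _ hk => by simp [Function.update_of_ne hk])
    (fun h => absurd (Finset.mem_univ i) h)]
  simp

lemma auxDT_pi_map_pair (PX : Measure 𝒳) [IsProbabilityMeasure PX] {M : ℕ} {i j : Fin M}
    (hij : i ≠ j) :
    (Measure.pi fun _ : Fin M => PX).map (fun c => (c i, c j)) = PX.prod PX := by
  classical
  refine (Measure.prod_eq fun s t hs ht => ?_).symm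
  rw [Measure.map_apply ((measurable_pi_apply i).prodMk (measurable_pi_apply j)) (hs.prod ht)]
  have hset : (fun c : Fin M → 𝒳 => (c i, c j)) ⁻¹' (s ×ˢ t)
      = Set.pi Set.univ (fun k => if k = i then s else if k = j then t else Set.univ) := by
    ext c
    simp only [Set.mem_preimage, Set.mem_prod, Set.mem_pi, Set.mem_univ, true_implies]
    constructor
    · rintro ⟨h1, h2⟩ k
      by_cases hki : k = i
      · subst hki; simp [h1]
      · by_cases hkj : k = j
        · subst hkj; simp [hki, h2]
        · simp [hki, hkj]
    · intro h
      refine ⟨by simpa using h i, ?_⟩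
      have := h j
      simp only [if_neg hij.symm, if_pos rfl] at this
      exact this
  rw [hset, Measure.pi_pi]
  have hprod : ∏ k : Fin M, PX (if k = i then s else if k = j then t else Set.univ)
      = ∏ k ∈ ({i, j} : Finset (Fin M)), PX (if k = i then s else if k = j then t else Set.univ) := by
    refine (Finset.prod_subset (Finset.subset_univ _) (fun k _ hk => ?_)).symm
    simp only [Finset.mem_insert, Finset.mem_singleton, not_or] at hk
    simp [hk.1, hk.2]
  rw [hprod, Finset.prod_pair hij]
  simp [hij.symm, if_neg]

end AuxDT

/-- dependence-testing bound: let `P_X` be an input distribution,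
`P_{Y|X}` a Markov kernel, `P_{XY} = P_X ⊗ P_{Y|X}` the joint law and
`P_Y` the induced output law. If `P_{XY} ≪ P_X × P_Y`, with information density
`i(x;y) = log (dP_{XY}/d(P_X × P_Y))(x,y)`, then for every `M ≥ 1` there is a code
(encoder `f`, measurable decoder `g`) whose average error probability satisfies
`ε̄ ≤ E[exp(−[i(X;Y) − log((M−1)/2)]⁺)]`. -/
theorem dependence_testing_bound
    {𝒳 𝒴 : Type*} [MeasurableSpace 𝒳] [MeasurableSpace 𝒴]
    [StandardBorelSpace 𝒳] [StandardBorelSpace 𝒴]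
    (PX : Measure 𝒳) [IsProbabilityMeasure PX]
    (κ : Kernel 𝒳 𝒴) [IsMarkovKernel κ]
    (h_ac : (PX ⊗ₘ κ) ≪ PX.prod ((PX ⊗ₘ κ).map Prod.snd))
    (M : ℕ) (hM : 0 < M) :
    ∃ (f : Fin M → 𝒳) (g : 𝒴 → Fin M), Measurable g ∧
      (1 / M : ℝ) * ∑ j, ((κ (f j)) {y | g y ≠ j}).toReal ≤
        ∫ p, Real.exp (-(max 0
            (Real.log (((PX ⊗ₘ κ).rnDeriv (PX.prod ((PX ⊗ₘ κ).map Prod.snd)) p).toReal)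
              - Real.log (((M : ℝ) - 1) / 2))))
          ∂(PX ⊗ₘ κ) := by
  classical
  -- the special case `M = 1`: the decoder is always correct
  rcases Nat.lt_or_ge M 2 with hM1 | hM2
  · obtain rfl : M = 1 := by omega
    have hne : Nonempty 𝒳 := by
      by_contra h
      rw [not_nonempty_iff] at h
      have h1 := measure_univ (μ := PX)
      rw [Set.univ_eq_empty_iff.mpr h, measure_empty] at h1
      exact zero_ne_one h1
    refine ⟨fun _ => Classical.arbitrary 𝒳, fun _ => 0, measurable_const, ?_⟩
    have hzero : ∀ j : Fin 1, {y : 𝒴 | (0 : Fin 1) ≠ j} = ∅ := by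
      intro j
      simp [Subsingleton.elim (0 : Fin 1) j]
    calc (1 / (1 : ℕ) : ℝ) * ∑ j : Fin 1, ((κ (Classical.arbitrary 𝒳)) {y | (0 : Fin 1) ≠ j}).toReal
        = 0 := by simp [hzero]
      _ ≤ _ := integral_nonneg fun p => (Real.exp_pos _).le
  -- main case `M ≥ 2`
  set PY := (PX ⊗ₘ κ).map Prod.snd with hPY
  set μ := PX ⊗ₘ κ with hμdef
  set ν := PX.prod PY with hνdef
  set Z := μ.rnDeriv ν with hZdef
  haveI : IsProbabilityMeasure PY :=
    Measure.isProbabilityMeasure_map measurable_snd.aemeasurable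
  have hZm : Measurable Z := Measure.measurable_rnDeriv μ ν
  set τ : ℝ := ((M : ℝ) - 1) / 2 with hτdef
  have hτ : 0 < τ := by
    have : (2 : ℝ) ≤ (M : ℝ) := by exact_mod_cast hM2
    rw [hτdef]; linarith
  set T : ℝ≥0∞ := ENNReal.ofReal τ with hTdef
  have hT0 : T ≠ 0 := by simp [hTdef, hτ]
  have hTtop : T ≠ ∞ := ENNReal.ofReal_ne_top
  set A : Set (𝒳 × 𝒴) := {p | T < Z p} with hAdef
  have hA : MeasurableSet A := measurableSet_lt measurable_const hZm
  -- the decoder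
  have hSnonempty : ∀ (c : Fin M → 𝒳) (y : 𝒴), (∃ i, T < Z (c i, y)) →
      (Finset.univ.filter fun i => T < Z (c i, y)).Nonempty := by
    rintro c y ⟨i, hi⟩
    exact ⟨i, Finset.mem_filter.mpr ⟨Finset.mem_univ _, hi⟩⟩
  set dec : (Fin M → 𝒳) → 𝒴 → Fin M := fun c y =>
    if h : ∃ i, T < Z (c i, y) then
      (Finset.univ.filter fun i => T < Z (c i, y)).min' (hSnonempty c y h)
    else ⟨0, hM⟩ with hdecdef
  have key : ∀ (c : Fin M → 𝒳) (y : 𝒴) (j : Fin M), dec c y = j ↔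
      ((T < Z (c j, y) ∧ ∀ i, T < Z (c i, y) → j ≤ i) ∨
        ((∀ i, ¬ T < Z (c i, y)) ∧ j = ⟨0, hM⟩)) := by
    intro c y j
    by_cases h : ∃ i, T < Z (c i, y)
    · rw [hdecdef]
      simp only [dif_pos h]
      set s := Finset.univ.filter fun i => T < Z (c i, y) with hs
      have hmem : ∀ i, i ∈ s ↔ T < Z (c i, y) := by
        intro i; simp [hs]
      constructor
      · rintro rfl
        exact Or.inl ⟨(hmem _).1 (s.min'_mem _),
          fun i hi => Finset.min'_le s i ((hmem i).2 hi)⟩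
      · rintro (⟨h1, h2⟩ | ⟨h1, _⟩)
        · exact le_antisymm (Finset.min'_le s j ((hmem j).2 h1))
            (Finset.le_min' _ _ _ fun i hi => h2 i ((hmem i).1 hi))
        · obtain ⟨i, hi⟩ := h
          exact absurd hi (h1 i)
    · rw [hdecdef]
      simp only [dif_neg h]
      push_neg at h
      constructor
      · rintro rfl
        exact Or.inr ⟨fun i => not_lt.2 (h i), rfl⟩
      · rintro (⟨h1, _⟩ | ⟨_, rfl⟩)
        · exact absurd h1 (not_lt.2 (h _))
        · rfl
  have hdec_meas : ∀ c, Measurable (dec c) := by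
    intro c
    apply measurable_to_countable'
    intro j
    have hyi : ∀ i : Fin M, MeasurableSet {y : 𝒴 | T < Z (c i, y)} := fun i =>
      measurableSet_lt measurable_const (hZm.comp (measurable_prodMk_left))
    have himp : ∀ i : Fin M, MeasurableSet {y : 𝒴 | T < Z (c i, y) → j ≤ i} := by
      intro i
      by_cases hji : j ≤ i
      · have : {y : 𝒴 | T < Z (c i, y) → j ≤ i} = Set.univ := by
          ext y; simp [hji]
        rw [this]; exact MeasurableSet.univ
      · have : {y : 𝒴 | T < Z (c i, y) → j ≤ i} = {y | T < Z (c i, y)}ᶜ := by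
          ext y; simp [hji]
        rw [this]; exact (hyi i).compl
    have hconst : MeasurableSet {y : 𝒴 | j = ⟨0, hM⟩} := by
      by_cases hj : j = ⟨0, hM⟩
      · have : {y : 𝒴 | j = ⟨0, hM⟩} = Set.univ := by ext y; simp [hj]
        rw [this]; exact MeasurableSet.univ
      · have : {y : 𝒴 | j = ⟨0, hM⟩} = ∅ := by ext y; simp [hj]
        rw [this]; exact MeasurableSet.empty
    have hset : dec c ⁻¹' {j} =
        ({y | T < Z (c j, y)} ∩ ⋂ i, {y : 𝒴 | T < Z (c i, y) → j ≤ i}) ∪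
          ((⋂ i, {y : 𝒴 | T < Z (c i, y)}ᶜ) ∩ {y : 𝒴 | j = ⟨0, hM⟩}) := by
      ext y
      rw [Set.mem_preimage, Set.mem_singleton_iff, key]
      simp only [Set.mem_union, Set.mem_inter_iff, Set.mem_iInter, Set.mem_setOf_eq,
        Set.mem_compl_iff]
    rw [hset]
    exact (((hyi j).inter (MeasurableSet.iInter himp)).union
      ((MeasurableSet.iInter fun i => (hyi i).compl).inter hconst))
  -- pointwise error bound
  have herr : ∀ (c : Fin M → 𝒳) (j : Fin M),
      κ (c j) {y | dec c y ≠ j} ≤ κ (c j) {y | ¬ T < Z (c j, y)} +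
        ∑ i ∈ Finset.univ.filter (· < j), κ (c j) {y | T < Z (c i, y)} := by
    intro c j
    have hsub : {y | dec c y ≠ j} ⊆ {y | ¬ T < Z (c j, y)} ∪
        ⋃ i ∈ Finset.univ.filter (· < j), {y | T < Z (c i, y)} := by
      intro y hy
      by_contra hmem
      simp only [Set.mem_union, Set.mem_iUnion, Finset.mem_filter, Finset.mem_univ, true_and,
        Set.mem_setOf_eq, exists_prop, not_or, not_exists, not_and, not_not] at hmem
      obtain ⟨h1, h2⟩ := hmem
      apply hy
      rw [key]
      refine Or.inl ⟨h1, fun i hi => ?_⟩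
      by_contra hlt
      exact h2 i (lt_of_not_ge hlt) hi
    calc κ (c j) {y | dec c y ≠ j}
        ≤ κ (c j) ({y | ¬ T < Z (c j, y)} ∪
            ⋃ i ∈ Finset.univ.filter (· < j), {y | T < Z (c i, y)}) := measure_mono hsub
      _ ≤ κ (c j) {y | ¬ T < Z (c j, y)} +
            κ (c j) (⋃ i ∈ Finset.univ.filter (· < j), {y | T < Z (c i, y)}) :=
          measure_union_le _ _
      _ ≤ _ := by
          gcongr
          exact measure_biUnion_finset_le _ _
  -- measurability of averaged quantities
  have hF1 : Measurable fun x => κ x {y | ¬ T < Z (x, y)} := by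
    have hset : ∀ x : 𝒳, {y | ¬ T < Z (x, y)} = Prod.mk x ⁻¹' Aᶜ := fun x => rfl
    simp_rw [hset]
    exact Kernel.measurable_kernel_prodMk_left hA.compl
  have hF2 : Measurable fun p : 𝒳 × 𝒳 => κ p.2 {y | T < Z (p.1, y)} := by
    have hA' : MeasurableSet {q : (𝒳 × 𝒳) × 𝒴 | T < Z (q.1.1, q.2)} :=
      measurableSet_lt measurable_const (hZm.comp ((measurable_fst.fst).prodMk measurable_snd))
    have hmk := Kernel.measurable_kernel_prodMk_left
      (κ := κ.comap Prod.snd measurable_snd) hA'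
    simpa [Kernel.comap_apply] using hmk
  have hcomp1 : ∀ j : Fin M, Measurable fun a : Fin M → 𝒳 => κ (a j) {y | ¬ T < Z (a j, y)} := by
    intro j
    have heq : (fun a : Fin M → 𝒳 => κ (a j) {y | ¬ T < Z (a j, y)}) =
        (fun x : 𝒳 => κ x {y | ¬ T < Z (x, y)}) ∘ (fun a => a j) := rfl
    rw [heq]
    exact hF1.comp (measurable_pi_apply j)
  have hcomp2 : ∀ i j : Fin M, Measurable fun a : Fin M → 𝒳 => κ (a j) {y | T < Z (a i, y)} := by
    intro i j
    have heq : (fun a : Fin M → 𝒳 => κ (a j) {y | T < Z (a i, y)}) =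
        (fun p : 𝒳 × 𝒳 => κ p.2 {y | T < Z (p.1, y)}) ∘ (fun a => (a i, a j)) := rfl
    rw [heq]
    exact hF2.comp ((measurable_pi_apply i).prodMk (measurable_pi_apply j))
  set π : Measure (Fin M → 𝒳) := Measure.pi (fun _ => PX) with hπdef
  have hI1 : ∀ j : Fin M, ∫⁻ c, κ (c j) {y | ¬ T < Z (c j, y)} ∂π = μ Aᶜ := by
    intro j
    calc ∫⁻ c, κ (c j) {y | ¬ T < Z (c j, y)} ∂π
        = ∫⁻ x, κ x {y | ¬ T < Z (x, y)} ∂PX := by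
          rw [← auxDT_pi_map_eval PX j, lintegral_map hF1 (measurable_pi_apply j)]
      _ = μ Aᶜ := by
          rw [hμdef, Measure.compProd_apply hA.compl]
          rfl
  have hI2 : ∀ i j : Fin M, i ≠ j → ∫⁻ c, κ (c j) {y | T < Z (c i, y)} ∂π = ν A := by
    intro i j hij
    calc ∫⁻ c, κ (c j) {y | T < Z (c i, y)} ∂π
        = ∫⁻ p : 𝒳 × 𝒳, κ p.2 {y | T < Z (p.1, y)} ∂(PX.prod PX) := by
          rw [← auxDT_pi_map_pair PX hij,
            lintegral_map hF2 ((measurable_pi_apply i).prodMk (measurable_pi_apply j))]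
      _ = ∫⁻ u, ∫⁻ v, κ v {y | T < Z (u, y)} ∂PX ∂PX := by
          rw [lintegral_prod _ hF2.aemeasurable]
      _ = ∫⁻ u, PY {y | T < Z (u, y)} ∂PX := by
          refine lintegral_congr fun u => ?_
          have hSu : MeasurableSet {y | T < Z (u, y)} :=
            measurableSet_lt measurable_const (hZm.comp measurable_prodMk_left)
          rw [hPY, hμdef, Measure.map_apply measurable_snd hSu,
            Measure.compProd_apply (measurable_snd hSu)]
          rfl
      _ = ν A := by
          rw [hνdef, Measure.prod_apply hA]
          rfl
  set Ebar : (Fin M → 𝒳) → ℝ≥0∞ := fun c =>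
    ∑ j, (κ (c j) {y | ¬ T < Z (c j, y)} +
      ∑ i ∈ Finset.univ.filter (· < j), κ (c j) {y | T < Z (c i, y)}) with hEdef
  have hEmeas : Measurable Ebar := by
    apply Finset.measurable_sum
    intro j _
    exact Measurable.add (hcomp1 j) (Finset.measurable_sum _ fun i _ => hcomp2 i j)
  set B : ℝ≥0∞ := μ Aᶜ + T * ν A with hBdef
  have hBtop : B ≠ ∞ := by
    rw [hBdef]
    exact ENNReal.add_ne_top.mpr ⟨measure_ne_top _ _,
      ENNReal.mul_ne_top hTtop (measure_ne_top _ _)⟩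
  have hM1 : 1 ≤ M := hM
  have hτM : ((M * (M - 1) / 2 : ℕ) : ℝ) = (M : ℝ) * τ := by
    have hsubM : M - 1 + 1 = M := Nat.succ_pred_eq_of_pos hM
    have heven : Even (M * (M - 1)) := by
      rw [mul_comm, ← hsubM]
      exact Nat.even_mul_succ_self (M - 1)
    have h2 : M * (M - 1) / 2 * 2 = M * (M - 1) := Nat.div_mul_cancel heven.two_dvd
    have h2' : ((M * (M - 1) / 2 : ℕ) : ℝ) * 2 = (M : ℝ) * ((M : ℝ) - 1) := by
      have hcast := congrArg (fun n : ℕ => (n : ℝ)) h2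
      push_cast [Nat.cast_sub hM1] at hcast
      linarith [hcast]
    rw [hτdef]
    linarith
  have hscalar : (∑ j : Fin M, ((j : ℕ) : ℝ≥0∞)) = (M : ℝ≥0∞) * T := by
    rw [← Nat.cast_sum, Fin.sum_univ_eq_sum_range (fun k => k) M, Finset.sum_range_id,
      ← ENNReal.ofReal_natCast, hτM, ENNReal.ofReal_mul (by positivity),
      ENNReal.ofReal_natCast, hTdef]
  have hstep : ∀ j : Fin M,
      ∫⁻ c, (κ (c j) {y | ¬ T < Z (c j, y)} +
        ∑ i ∈ Finset.univ.filter (· < j), κ (c j) {y | T < Z (c i, y)}) ∂π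
      = μ Aᶜ + ((j : ℕ) : ℝ≥0∞) * ν A := by
    intro j
    rw [lintegral_add_left (hcomp1 j),
      lintegral_finset_sum _ (fun i _ => hcomp2 i j), hI1 j]
    congr 1
    rw [Finset.sum_congr rfl (fun i hi => hI2 i j (Finset.mem_filter.mp hi).2.ne),
      Finset.sum_const, nsmul_eq_mul]
    congr 2
    have hfe : Finset.univ.filter (· < j) = Finset.Iio j := by
      ext i; simp
    rw [hfe, Fin.card_Iio]
  have hEbound : ∫⁻ c, Ebar c ∂π ≤ (M : ℝ≥0∞) * B := by
    calc ∫⁻ c, Ebar c ∂π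
        = ∑ j : Fin M, (μ Aᶜ + ((j : ℕ) : ℝ≥0∞) * ν A) := by
          rw [hEdef]
          beta_reduce
          rw [lintegral_finset_sum _ (fun j _ => Measurable.fun_add (hcomp1 j)
            (Finset.measurable_sum _ fun i _ => hcomp2 i j))]
          exact Finset.sum_congr rfl fun j _ => hstep j
      _ = (M : ℝ≥0∞) * μ Aᶜ + (∑ j : Fin M, ((j : ℕ) : ℝ≥0∞)) * ν A := by
          rw [Finset.sum_add_distrib, Finset.sum_const, Finset.card_univ, Fintype.card_fin,
            nsmul_eq_mul, ← Finset.sum_mul]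
      _ ≤ (M : ℝ≥0∞) * B := le_of_eq (by rw [hscalar, hBdef]; ring)
  obtain ⟨c, hc⟩ : ∃ c, Ebar c ≤ (M : ℝ≥0∞) * B := by
    obtain ⟨c, hc⟩ := exists_le_lintegral (μ := π) hEmeas.aemeasurable
    exact ⟨c, hc.trans hEbound⟩
  -- computing the right-hand side integral
  have hμν : ν.withDensity Z = μ := Measure.withDensity_rnDeriv_eq μ ν h_ac
  set hfun : 𝒳 × 𝒴 → ℝ :=
    fun p => Real.exp (-(max 0 (Real.log (Z p).toReal - Real.log τ))) with hhdef
  have hhm : Measurable hfun := by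
    apply Real.measurable_exp.comp
    apply Measurable.neg
    exact Measurable.max measurable_const
      ((Real.measurable_log.comp hZm.ennreal_toReal).sub measurable_const)
  have hhnn : ∀ p, 0 ≤ hfun p := fun p => (Real.exp_pos _).le
  have hlint : ∫⁻ p, ENNReal.ofReal (hfun p) ∂μ = μ Aᶜ + T * ν A := by
    rw [← hμν, lintegral_withDensity_eq_lintegral_mul ν hZm hhm.ennreal_ofReal]
    simp only [Pi.mul_apply]
    rw [← lintegral_add_compl (fun p => Z p * ENNReal.ofReal (hfun p)) hA]
    have hcompl : ∫⁻ p in Aᶜ, Z p * ENNReal.ofReal (hfun p) ∂ν = μ Aᶜ := by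
      have heq : ∀ p ∈ Aᶜ, Z p * ENNReal.ofReal (hfun p) = Z p := by
        intro p hp
        rcases eq_or_ne (Z p) 0 with h0 | h0
        · simp [h0]
        · have hle : Z p ≤ T := not_lt.1 hp
          have hfin : Z p ≠ ∞ := ne_top_of_le_ne_top hTtop hle
          have hz0 : 0 < (Z p).toReal := ENNReal.toReal_pos h0 hfin
          have hzτ : (Z p).toReal ≤ τ := ENNReal.toReal_le_of_le_ofReal hτ.le hle
          have hone : hfun p = 1 := by
            simp only [hhdef]
            rw [max_eq_left (sub_nonpos.2 (Real.log_le_log hz0 hzτ)), neg_zero, Real.exp_zero]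
          rw [hone, ENNReal.ofReal_one, mul_one]
      rw [setLIntegral_congr_fun_ae hA.compl (ae_of_all ν heq),
        ← withDensity_apply Z hA.compl, hμν]
    have hAside : ∫⁻ p in A, Z p * ENNReal.ofReal (hfun p) ∂ν = T * ν A := by
      have hae : ∀ᵐ p ∂(ν.restrict A), Z p * ENNReal.ofReal (hfun p) = T := by
        filter_upwards [ae_restrict_of_ae (Measure.rnDeriv_lt_top μ ν), ae_restrict_mem hA]
          with p hfin hp
        have hTZ : T < Z p := hp
        have hz : τ < (Z p).toReal := (ENNReal.ofReal_lt_iff_lt_toReal hτ.le hfin.ne).1 hTZ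
        have hz0 : 0 < (Z p).toReal := hτ.trans hz
        have hh : hfun p = τ / (Z p).toReal := by
          simp only [hhdef]
          rw [max_eq_right (sub_nonneg.2 (Real.log_le_log hτ hz.le)), neg_sub,
            Real.exp_sub, Real.exp_log hτ, Real.exp_log hz0]
        rw [hh, ENNReal.ofReal_div_of_pos hz0, ENNReal.ofReal_toReal hfin.ne, hTdef]
        exact ENNReal.mul_div_cancel (lt_of_le_of_lt (zero_le (a := T)) hTZ).ne' hfin.ne
      rw [lintegral_congr_ae hae, setLIntegral_const]
    rw [hcompl, hAside, hμν]
    exact add_comm (T * ν A) (μ Aᶜ)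
  have hint : ∫ p, hfun p ∂μ = B.toReal := by
    rw [integral_eq_lintegral_of_nonneg_ae (ae_of_all μ hhnn) hhm.aestronglyMeasurable,
      hlint, hBdef]
  -- conclusion
  refine ⟨c, dec c, hdec_meas c, ?_⟩
  rw [hint]
  simp only [hEdef] at hc
  have hsum : ∑ j, κ (c j) {y | dec c y ≠ j} ≤ (M : ℝ≥0∞) * B :=
    le_trans (Finset.sum_le_sum fun j _ => herr c j) hc
  have hMB : ((M : ℝ≥0∞) * B) ≠ ∞ := ENNReal.mul_ne_top (by simp) hBtop
  have hMne : (0:ℝ) < (M : ℝ) := by exact_mod_cast hM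
  calc (1 / (M : ℝ)) * ∑ j, (κ (c j) {y | dec c y ≠ j}).toReal
      = (1 / (M : ℝ)) * (∑ j, κ (c j) {y | dec c y ≠ j}).toReal := by
        rw [ENNReal.toReal_sum (fun j _ => measure_ne_top _ _)]
    _ ≤ (1 / (M : ℝ)) * ((M : ℝ≥0∞) * B).toReal := by
        have := ENNReal.toReal_mono hMB hsum
        gcongr
    _ = B.toReal := by
        rw [ENNReal.toReal_mul]
        simp only [ENNReal.toReal_natCast]
        field_simp
end

section
/- Metaconverse bound (used in the proof of the converse theorem): Let P_{Y|X} be a Markov kernel from a measurable input space 𝒳 to a measurable output space 𝒴, and let Q_Y be any probability distribution on 𝒴. For α ∈ (0,1] and probability measures P, Q on 𝒴, let β_α(P,Q) = inf{ ∫ T dQ : T: 𝒴 → [0,1] measurable, ∫ T dP ≥ α } denote the minimum type-II error of a (randomized) binary hypothesis test between P and Q with type-I error at most 1−α. Then every code with M messages and maximal error probability ε ∈ (0,1) for the channel P_{Y|X} (encoder f, decoder g with Pr[g(Y) ≠ j | X = f(j)] ≤ ε for all j) satisfies inf_{j ∈ {1,…,M}} β_{1−ε}( P_{Y|X=f(j)},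 Q_Y ) ≤ 1/M. -/
open MeasureTheory ProbabilityTheory
open scoped ENNReal BigOperators

noncomputable section

/-- `β_α(P, Q)`: the minimum type-II error `∫ T dQ` over randomized tests
`T : 𝒴 → [0,1]` with type-I error at most `1 − α` (i.e. `∫ T dP ≥ α`). -/
def betaFn {𝒴 : Type*} [MeasurableSpace 𝒴] (α : ℝ) (P Q : Measure 𝒴) : ℝ :=
  sInf { x | ∃ T : 𝒴 → ℝ, Measurable T ∧ (∀ y, T y ∈ Set.Icc (0 : ℝ) 1) ∧
    α ≤ ∫ y, T y ∂P ∧ x = ∫ y, T y ∂Q }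

/-- metaconverse bound: every code with `M` messages and maximal
error probability `ε` for the channel `P_{Y|X}` satisfies, for any auxiliary output
distribution `Q_Y`, `inf_j β_{1−ε}(P_{Y|X=f(j)}, Q_Y) ≤ 1/M`. -/
theorem metaconverse
    {𝒳 𝒴 : Type*} [MeasurableSpace 𝒳] [MeasurableSpace 𝒴]
    [StandardBorelSpace 𝒳] [StandardBorelSpace 𝒴]
    (κ : Kernel 𝒳 𝒴) [IsMarkovKernel κ]
    (QY : Measure 𝒴) [IsProbabilityMeasure QY]
    (M : ℕ) (hM : 0 < M) (ε : ℝ) (hε : 0 < ε) (hε1 : ε < 1)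
    (f : Fin M → 𝒳) (g : 𝒴 → Fin M) (hg : Measurable g)
    (h_err : ∀ j : Fin M, (κ (f j)) {y | g y ≠ j} ≤ ENNReal.ofReal ε) :
    ⨅ j : Fin M, betaFn (1 - ε) (κ (f j)) QY ≤ 1 / M := by
  haveI : Nonempty (Fin M) := Fin.pos_iff_nonempty.mp hM
  -- decoding regions
  set s : Fin M → Set 𝒴 := fun j => g ⁻¹' {j} with hs
  have hmeas : ∀ j, MeasurableSet (s j) := fun j => hg (measurableSet_singleton j)
  -- step 1: betaFn ≤ QY (s j) for each j
  have key : ∀ j : Fin M, betaFn (1 - ε) (κ (f j)) QY ≤ (QY (s j)).toReal := by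
    intro j
    have hcompl : {y | g y ≠ j} = (s j)ᶜ := by
      ext y; simp [hs, Set.mem_compl_iff]
    apply csInf_le
    · refine ⟨0, fun x hx => ?_⟩
      obtain ⟨T, hTm, hT01, _, hx⟩ := hx
      rw [hx]
      exact integral_nonneg fun y => (hT01 y).1
    · refine ⟨(s j).indicator (fun _ => (1:ℝ)), measurable_const.indicator (hmeas j),
        fun y => ?_, ?_, ?_⟩
      · by_cases hy : y ∈ s j <;> simp [Set.indicator, hy]
      · rw [integral_indicator_const (1:ℝ) (hmeas j)]
        simp only [smul_eq_mul, mul_one]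
        have h1 : κ (f j) (s j)ᶜ ≤ ENNReal.ofReal ε := by
          rw [← hcompl]; exact h_err j
        have h2 : κ (f j) (s j) = 1 - κ (f j) (s j)ᶜ := by
          have := measure_compl (μ := κ (f j)) (hmeas j).compl (measure_ne_top _ _)
          rwa [compl_compl, measure_univ] at this
        have h3 : (κ (f j) (s j)ᶜ).toReal ≤ ε := by
          refine ENNReal.toReal_le_of_le_ofReal hε.le h1
        have hne : κ (f j) (s j)ᶜ ≠ ⊤ := measure_ne_top _ _
        rw [measureReal_def]
        rw [h2, ENNReal.toReal_sub_of_le (by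
            calc κ (f j) (s j)ᶜ ≤ ENNReal.ofReal ε := h1
            _ ≤ 1 := by simpa using ENNReal.ofReal_le_one.mpr hε1.le) (by simp)]
        simp only [ENNReal.toReal_one]
        linarith
      · rw [integral_indicator_const (1:ℝ) (hmeas j)]
        simp
        rfl
  -- step 2: some j has QY (s j) ≤ 1/M
  have hsum : ∑ j : Fin M, (QY (s j)).toReal = 1 := by
    have : ∑ j : Fin M, QY (s j) = 1 := by
      have h := MeasureTheory.sum_measure_preimage_singleton (μ := QY)
        (Finset.univ : Finset (Fin M)) (fun j _ => hg (measurableSet_singleton j))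
      simpa [hs] using h
    rw [← ENNReal.toReal_one, ← this, ENNReal.toReal_sum]
    exact fun j _ => measure_ne_top _ _
  have hpigeon : ∃ j : Fin M, (QY (s j)).toReal ≤ 1 / M := by
    by_contra h
    push_neg at h
    have := Finset.sum_lt_sum_of_nonempty (Finset.univ_nonempty)
      (fun j _ => h j)
    rw [hsum, Finset.sum_const, Finset.card_univ, Fintype.card_fin] at this
    have hM' : (0:ℝ) < M := by exact_mod_cast hM
    have heq : M • ((1:ℝ)/M) = 1 := by
      simp [nsmul_eq_mul]
      field_simp
    rw [heq] at this
    linarith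
  obtain ⟨j, hj⟩ := hpigeon
  refine le_trans (ciInf_le ?_ j) (le_trans (key j) hj)
  exact (Set.finite_range _).bddBelow
end
end
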